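/- (Normal-families rigidity) For every R > 0 and ε > 0 there exists δ ∈ (0,1) such that for every holomorphic F : ℍ → ℍ with F(1) = 1 and F'(1) ∈ (1-δ, 1) (real), one has |F'(ζ) - 1| < ε for all ζ in the closed hyperbolic disk of radius R centered at 1 in ℍ. -/

import Mathlib

open Set Filter

def HalfPlane : Set ℂ := {z : ℂ | 0 < z.re}

noncomputable def pdistH (z w : ℂ) : ℝ :=
  ‖z - w‖ / ‖z + (starRingEnd ℂ) w‖

noncomputable def hdistH (z w : ℂ) : ℝ :=
  Real.log ((1 + pdistH z w) / (1 - pdistH z w))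

open Metric

noncomputable def Complex.abs : AbsoluteValue ℂ ℝ :=
  IsAbsoluteValue.toAbsoluteValue (norm : ℂ → ℝ)

@[simp]
lemma Complex.norm_eq_abs (z : ℂ) : ‖z‖ = Complex.abs z := rfl

lemma Complex.sq_abs (z : ℂ) : Complex.abs z ^ 2 = Complex.normSq z := Complex.sq_norm z

lemma Complex.abs_ofReal (r : ℝ) : Complex.abs (r : ℂ) = |r| := by
  change ‖(r : ℂ)‖ = |r|
  simp only [Complex.norm_real, Real.norm_eq_abs]

lemma Complex.abs_apply (z : ℂ) : Complex.abs z = Real.sqrt (Complex.normSq z) := by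
  rw [← Complex.sq_abs, Real.sqrt_sq (Complex.abs.nonneg z)]

lemma normSq_lt_one_iff {w : ℂ} : Complex.normSq w < 1 ↔ Complex.abs w < 1 := by
  rw [← Complex.sq_abs]
  constructor
  · intro h
    nlinarith [Complex.abs.nonneg w]
  · intro h
    nlinarith [Complex.abs.nonneg w]

lemma cayley_mem_ball {ζ : ℂ} (h : 0 < ζ.re) : (ζ - 1) / (ζ + 1) ∈ ball (0 : ℂ) 1 := by
  have h1 : ζ + 1 ≠ 0 := by
    intro hc
    have : (ζ + 1).re = 0 := by rw [hc]; simp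
    simp [Complex.add_re] at this
    linarith
  have hlt : Complex.abs (ζ - 1) < Complex.abs (ζ + 1) := by
    have h2 : Complex.normSq (ζ - 1) < Complex.normSq (ζ + 1) := by
      simp [Complex.normSq_apply, Complex.sub_re, Complex.sub_im, Complex.add_re, Complex.add_im]
      nlinarith
    nlinarith [Complex.abs.nonneg (ζ - 1), Complex.abs.nonneg (ζ + 1), Complex.sq_abs (ζ - 1),
      Complex.sq_abs (ζ + 1)]
  rw [mem_ball_zero_iff, Complex.norm_eq_abs, map_div₀, div_lt_one]
  · exact hlt
  · exact (Complex.abs.pos h1)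

lemma inv_cayley_mem {w : ℂ} (hw : w ∈ ball (0 : ℂ) 1) : 0 < ((1 + w) / (1 - w)).re := by
  rw [mem_ball_zero_iff, Complex.norm_eq_abs] at hw
  have hns : Complex.normSq w < 1 := normSq_lt_one_iff.mpr hw
  have h1 : (1 : ℂ) - w ≠ 0 := by
    intro hc
    have : w = 1 := by linear_combination -hc
    rw [this] at hw; simp at hw
  have hpos : 0 < Complex.normSq (1 - w) := Complex.normSq_pos.mpr h1
  rw [Complex.div_re]
  have hre : (1 + w).re * (1 - w).re + (1 + w).im * (1 - w).im = 1 - Complex.normSq w := by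
    simp [Complex.normSq_apply, Complex.add_re, Complex.add_im, Complex.sub_re, Complex.sub_im]
    ring
  have : 0 < (1 - Complex.normSq w) / Complex.normSq (1 - w) :=
    div_pos (by linarith) hpos
  calc (0:ℝ) < (1 - Complex.normSq w) / Complex.normSq (1 - w) := this
    _ = (1 + w).re * (1 - w).re / Complex.normSq (1 - w)
        + (1 + w).im * (1 - w).im / Complex.normSq (1 - w) := by
        rw [← hre]; ring

lemma hasDerivAt_cayley {ζ : ℂ} (h : ζ + 1 ≠ 0) :
    HasDerivAt (fun z : ℂ => (z - 1) / (z + 1)) (2 / (ζ + 1) ^ 2) ζ := by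
  have h1 : HasDerivAt (fun z : ℂ => z - 1) 1 ζ := (hasDerivAt_id ζ).sub_const 1
  have h2 : HasDerivAt (fun z : ℂ => z + 1) 1 ζ := (hasDerivAt_id ζ).add_const 1
  have := h1.div h2 h
  rw [show (2 / (ζ + 1) ^ 2) = (1 * (ζ + 1) - (ζ - 1) * 1) / (ζ + 1) ^ 2 by ring]
  exact this

lemma hasDerivAt_invcayley {w : ℂ} (h : (1:ℂ) - w ≠ 0) :
    HasDerivAt (fun w : ℂ => (1 + w) / (1 - w)) (2 / (1 - w) ^ 2) w := by
  have h1 : HasDerivAt (fun w : ℂ => 1 + w) 1 w := (hasDerivAt_id w).const_add 1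
  have h2 : HasDerivAt (fun w : ℂ => 1 - w) (-1) w := (hasDerivAt_id w).const_sub 1
  have := h1.div h2 h
  rw [show (2 / (1 - w) ^ 2) = (1 * (1 - w) - (1 + w) * (-1)) / (1 - w) ^ 2 by ring]
  exact this

lemma inv_cayley_cayley {ζ : ℂ} (h : 0 < ζ.re) :
    (1 + (ζ - 1) / (ζ + 1)) / (1 - (ζ - 1) / (ζ + 1)) = ζ := by
  have h1 : ζ + 1 ≠ 0 := by
    intro hc
    have : (ζ + 1).re = 0 := by rw [hc]; simp
    simp [Complex.add_re] at this
    linarith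
  field_simp
  ring

lemma key_g_bound {f : ℂ → ℂ} (hf : DifferentiableOn ℂ f (ball 0 1))
    (hmaps : MapsTo f (ball 0 1) (ball 0 1)) (hf0 : f 0 = 0)
    {d : ℝ} (hd0 : 0 < d) (hd1 : d < 1) (hderiv : deriv f 0 = (d : ℂ))
    {w : ℂ} (hw : w ∈ ball (0:ℂ) 1) :
    Complex.abs (dslope f 0 w - 1) ≤ 2 * (1 - d) / (1 - Complex.abs w) := by
  set g := dslope f 0 with hg_def
  have hball : ball (0:ℂ) 1 ∈ nhds (0:ℂ) := ball_mem_nhds _ one_pos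
  have hg_diff : DifferentiableOn ℂ g (ball 0 1) :=
    (Complex.differentiableOn_dslope hball).mpr hf
  have hmaps' : MapsTo f (ball 0 1) (ball (f 0) 1) := by rwa [hf0]
  have hg1 : ∀ v ∈ ball (0:ℂ) 1, Complex.abs (g v) ≤ 1 := by
    intro v hv
    have := Complex.norm_dslope_le_div_of_mapsTo_ball hf (hmaps'.mono_right ball_subset_closedBall) hv
    simpa using this
  have hg0 : g 0 = (d : ℂ) := by rw [hg_def, dslope_same]; exact hderiv
  -- denominator nonvanishing
  have hden : ∀ v ∈ ball (0:ℂ) 1, (1 : ℂ) - d * g v ≠ 0 := by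
    intro v hv hc
    have h1 : Complex.abs ((d:ℂ) * g v) ≤ d := by
      rw [map_mul]
      calc Complex.abs (d:ℂ) * Complex.abs (g v) ≤ Complex.abs (d:ℂ) * 1 :=
            mul_le_mul_of_nonneg_left (hg1 v hv) (Complex.abs.nonneg _)
        _ = |d| := by rw [mul_one, Complex.abs_ofReal]
        _ = d := abs_of_pos hd0
    have h2 : (d:ℂ) * g v = 1 := by linear_combination -hc
    rw [h2] at h1; simp at h1; linarith
  set h : ℂ → ℂ := fun v => ((d:ℂ) - g v) / (1 - d * g v) with hh_def
  have hh_diff : DifferentiableOn ℂ h (ball 0 1) := by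
    apply DifferentiableOn.div
    · exact (differentiableOn_const _).sub hg_diff
    · exact (differentiableOn_const _).sub ((differentiableOn_const _).mul hg_diff)
    · exact hden
  have hh0 : h 0 = 0 := by
    simp [hh_def, hg0]
  have hh_le : ∀ v ∈ ball (0:ℂ) 1, Complex.abs (h v) ≤ 1 := by
    intro v hv
    have key : Complex.normSq ((d:ℂ) - g v) ≤ Complex.normSq (1 - d * g v) := by
      have habs : Complex.abs (g v) ≤ 1 := hg1 v hv
      have hns : Complex.normSq (g v) ≤ 1 := by
        rw [← Complex.sq_abs]; nlinarith [Complex.abs.nonneg (g v)]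
      have expand : Complex.normSq (1 - d * g v) - Complex.normSq ((d:ℂ) - g v)
          = (1 - d^2) * (1 - Complex.normSq (g v)) := by
        simp [Complex.normSq_apply, Complex.sub_re, Complex.sub_im, Complex.mul_re,
          Complex.mul_im, Complex.ofReal_re, Complex.ofReal_im]
        ring
      nlinarith [mul_nonneg (by nlinarith : (0:ℝ) ≤ 1 - d^2)
        (by linarith : (0:ℝ) ≤ 1 - Complex.normSq (g v))]
    rw [hh_def]
    simp only [map_div₀]
    rw [div_le_one (Complex.abs.pos (hden v hv))]
    have := Real.sqrt_le_sqrt key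
    rwa [Complex.abs_apply, Complex.abs_apply]
  -- Schwarz for h
  have schwarz_h : ∀ v ∈ ball (0:ℂ) 1, Complex.abs (h v) ≤ Complex.abs v := by
    intro v hv
    have hds : ‖dslope h 0 v‖ ≤ 1 := by
      apply le_of_forall_pos_le_add
      intro e he
      have hmapsh : MapsTo h (ball 0 1) (ball (h 0) (1 + e)) := by
        intro x hx
        rw [mem_ball, hh0, dist_zero_right, Complex.norm_eq_abs]
        calc Complex.abs (h x) ≤ 1 := hh_le x hx
          _ < 1 + e := by linarith
      have := Complex.norm_dslope_le_div_of_mapsTo_ball hh_diff (hmapsh.mono_right ball_subset_closedBall) hv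
      simpa using this
    rcases eq_or_ne v 0 with rfl | hv0
    · simp [hh0]
    · rw [dslope_of_ne _ hv0, slope_def_field, hh0, sub_zero, sub_zero] at hds
      rw [Complex.norm_eq_abs, map_div₀, div_le_one (Complex.abs.pos hv0)] at hds
      simpa using hds
  -- now extract the estimate
  have hsp : Complex.abs ((d:ℂ) - g w) ≤ Complex.abs w * Complex.abs (1 - d * g w) := by
    have := schwarz_h w hw
    rw [hh_def] at this
    simp only [map_div₀] at this
    rw [div_le_iff₀ (Complex.abs.pos (hden w hw))] at this
    linarith [this]
  have hp1 : Complex.abs w < 1 := by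
    rwa [mem_ball_zero_iff, Complex.norm_eq_abs] at hw
  have hp0 : 0 ≤ Complex.abs w := Complex.abs.nonneg w
  have habsg : Complex.abs (g w) ≤ 1 := hg1 w hw
  -- triangle inequalities
  have t1 : Complex.abs (1 - g w) ≤ Complex.abs ((1:ℂ) - d) + Complex.abs ((d:ℂ) - g w) := by
    calc Complex.abs (1 - g w) = Complex.abs (((1:ℂ) - d) + ((d:ℂ) - g w)) := by ring_nf
      _ ≤ _ := Complex.abs.add_le _ _
  have t2 : Complex.abs (1 - d * g w) ≤ Complex.abs (1 - g w) + (1 - d) := by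
    calc Complex.abs (1 - d * g w) = Complex.abs ((1 - g w) + (1 - d) * g w) := by ring_nf
      _ ≤ Complex.abs (1 - g w) + Complex.abs (((1:ℝ) - d : ℝ) * g w) := by
          have := Complex.abs.add_le (1 - g w) (((1:ℝ) - d : ℂ) * g w)
          convert this using 3 <;> push_cast <;> rfl
      _ ≤ Complex.abs (1 - g w) + (1 - d) := by
          rw [map_mul, Complex.abs_ofReal, abs_of_pos (by linarith : (0:ℝ) < 1 - d)]
          nlinarith
  have habs1d : Complex.abs ((1:ℂ) - d) = 1 - d := by
    rw [show ((1:ℂ) - d) = (((1:ℝ) - d : ℝ) : ℂ) by push_cast; ring, Complex.abs_ofReal]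
    exact abs_of_pos (by linarith)
  -- combine
  have key : (1 - Complex.abs w) * Complex.abs (1 - g w) ≤ (1 - d) * (1 + Complex.abs w) := by
    nlinarith [hsp, t1, t2, habs1d]
  have h1w : 0 < 1 - Complex.abs w := by linarith
  have hcomm : Complex.abs (dslope f 0 w - 1) = Complex.abs (1 - g w) := by
    rw [← hg_def]; exact Complex.abs.map_sub _ _
  rw [hcomm, le_div_iff₀ h1w]
  nlinarith [key, hp0]

lemma abs_sub_le'' (a b : ℂ) : Complex.abs (a - b) ≤ Complex.abs a + Complex.abs b := by
  simpa [Complex.norm_eq_abs] using norm_sub_le a b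

lemma isOpen_halfPlane : IsOpen HalfPlane :=
  isOpen_lt continuous_const Complex.continuous_re

lemma halfPlane_add_one_ne {ζ : ℂ} (h : ζ ∈ HalfPlane) : ζ + 1 ≠ 0 := by
  intro hc
  have : (ζ + 1).re = 0 := by rw [hc]; simp
  simp only [Complex.add_re, Complex.one_re] at this
  have := h
  simp only [HalfPlane, mem_setOf_eq] at this
  linarith

lemma ball_one_sub_ne {w : ℂ} (hw : w ∈ ball (0:ℂ) 1) : (1:ℂ) - w ≠ 0 := by
  rw [mem_ball_zero_iff] at hw
  intro hc
  have : w = 1 := by linear_combination -hc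
  rw [this] at hw; simp at hw


set_option maxHeartbeats 1000000 in
theorem normal_families_rigidity :
    ∀ R > (0:ℝ), ∀ ε > (0:ℝ), ∃ δ : ℝ, 0 < δ ∧ δ < 1 ∧
      ∀ F : ℂ → ℂ, DifferentiableOn ℂ F HalfPlane → MapsTo F HalfPlane HalfPlane →
        F 1 = 1 → (∃ d : ℝ, deriv F 1 = (d : ℂ) ∧ 1 - δ < d ∧ d < 1) →
        ∀ ζ ∈ HalfPlane, hdistH ζ 1 ≤ R → ‖deriv F ζ - 1‖ < ε := by
  intro R hR ε hε
  set E : ℝ := Real.exp R with hE_def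
  have hE1 : 1 < E := by
    rw [hE_def, ← Real.exp_zero]
    exact Real.exp_lt_exp.mpr hR
  set t : ℝ := 2 / (E + 1) with ht_def
  have ht0 : 0 < t := by positivity
  have ht1 : t < 1 := by
    rw [ht_def, div_lt_one (by linarith)]; linarith
  refine ⟨min (1/2) (min (t^2/8) (ε * t^4/500)), ?_, ?_, ?_⟩
  · have : 0 < ε * t^4/500 := by positivity
    positivity
  · calc min (1/2) (min (t^2/8) (ε * t^4/500)) ≤ 1/2 := min_le_left _ _
      _ < 1 := by norm_num
  set δ : ℝ := min (1/2) (min (t^2/8) (ε * t^4/500)) with hδ_def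
  have hδ_le_t : δ ≤ t^2/8 := le_trans (min_le_right _ _) (min_le_left _ _)
  have hδ_le_ε : δ ≤ ε * t^4/500 := le_trans (min_le_right _ _) (min_le_right _ _)
  have hδ_le_half : δ ≤ 1/2 := min_le_left _ _
  clear_value E t δ
  intro F hF hFm hF1 hd ζ hζ hζR
  obtain ⟨d, hdF, hdlo, hdhi⟩ := hd
  have h1d : 1 - d < δ := by linarith
  have hd0 : 0 < d := by linarith
  -- the Cayley transforms
  set φ : ℂ → ℂ := fun z => (z - 1) / (z + 1) with hφ_def
  set ψ : ℂ → ℂ := fun w => (1 + w) / (1 - w) with hψ_def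
  set f : ℂ → ℂ := φ ∘ F ∘ ψ with hf_def
  have hψ_diff : DifferentiableOn ℂ ψ (ball 0 1) := by
    apply DifferentiableOn.div
    · exact (differentiableOn_const _).add differentiableOn_id
    · exact (differentiableOn_const _).sub differentiableOn_id
    · exact fun w hw => ball_one_sub_ne hw
  have hψ_maps : MapsTo ψ (ball 0 1) HalfPlane := fun w hw => inv_cayley_mem hw
  have hφ_diff : DifferentiableOn ℂ φ HalfPlane := by
    apply DifferentiableOn.div
    · exact differentiableOn_id.sub (differentiableOn_const _)
    · exact differentiableOn_id.add (differentiableOn_const _)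
    · exact fun z hz => halfPlane_add_one_ne hz
  have hφ_maps : MapsTo φ HalfPlane (ball 0 1) := fun z hz => cayley_mem_ball hz
  have hf_diff : DifferentiableOn ℂ f (ball 0 1) :=
    (hφ_diff.comp (hF.comp hψ_diff hψ_maps) (hFm.comp hψ_maps))
  have hf_maps : MapsTo f (ball 0 1) (ball 0 1) :=
    hφ_maps.comp (hFm.comp hψ_maps)
  have hψ0 : ψ 0 = 1 := by simp [hψ_def]
  have hf0 : f 0 = 0 := by
    simp only [hf_def, Function.comp_apply, hψ0, hF1, hφ_def]
    simp
  have hone_mem : (1:ℂ) ∈ HalfPlane := by simp [HalfPlane]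
  have hfd : deriv f 0 = (d:ℂ) := by
    have HΨ : HasDerivAt ψ 2 0 := by
      have := hasDerivAt_invcayley (show (1:ℂ) - 0 ≠ 0 by norm_num)
      simpa using this
    have HF : HasDerivAt F (d:ℂ) (ψ 0) := by
      rw [hψ0]
      have hdiff : DifferentiableAt ℂ F 1 :=
        hF.differentiableAt (isOpen_halfPlane.mem_nhds hone_mem)
      have := hdiff.hasDerivAt
      rwa [hdF] at this
    have HΦ : HasDerivAt φ (1/2) (F (ψ 0)) := by
      rw [hψ0, hF1]
      have := hasDerivAt_cayley (show (1:ℂ) + 1 ≠ 0 by norm_num)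
      convert this using 1
      norm_num
    have Hcomp : HasDerivAt f (1/2 * ((d:ℂ) * 2)) 0 := by
      rw [hf_def]
      exact HΦ.comp 0 (HF.comp 0 HΨ)
    have := Hcomp.deriv
    rw [this]; ring
  -- the point z
  set z : ℂ := φ ζ with hz_def
  have hζre : 0 < ζ.re := hζ
  have hz_mem : z ∈ ball (0:ℂ) 1 := hφ_maps hζ
  have hz_abs : Complex.abs z < 1 := by rwa [mem_ball_zero_iff, Complex.norm_eq_abs] at hz_mem
  have hz_le : Complex.abs z ≤ 1 - t := by
    have hp_eq : pdistH ζ 1 = Complex.abs z := by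
      rw [pdistH, hz_def, hφ_def]
      simp only [map_one]
      rw [map_div₀]
      rfl
    set p : ℝ := Complex.abs z with hp_def
    have hp0 : 0 ≤ p := Complex.abs.nonneg z
    have hp1 : p < 1 := hz_abs
    rw [hdistH, hp_eq] at hζR
    have hpos : (0:ℝ) < (1 + p) / (1 - p) := by
      apply div_pos <;> linarith
    rw [Real.log_le_iff_le_exp hpos] at hζR
    rw [div_le_iff₀ (by linarith : (0:ℝ) < 1 - p)] at hζR
    -- 1 + p ≤ E * (1 - p)  ⇒  p ≤ 1 - t
    have ht_eq : t * (E + 1) = 2 := by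
      rw [ht_def]; field_simp
    nlinarith [hζR, ht_eq]
  -- eta
  set η : ℝ := 4 * (1 - d) with hη_def
  have hη0 : 0 < η := by rw [hη_def]; linarith
  have hηt : η < 4 * δ := by rw [hη_def]; linarith
  have hη_small : η < t^2/2 := by nlinarith [hδ_le_t]
  clear_value η
  -- dslope estimate
  have hg_est : ∀ w : ℂ, Complex.abs w ≤ 1 - t/2 →
      Complex.abs (dslope f 0 w - 1) * t ≤ η := by
    intro w hw
    have hw_mem : w ∈ ball (0:ℂ) 1 := by
      rw [mem_ball_zero_iff, Complex.norm_eq_abs]; linarith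
    have := key_g_bound hf_diff hf_maps hf0 hd0 hdhi hfd hw_mem
    have h1 : t/2 ≤ 1 - Complex.abs w := by linarith
    have h2 : 2 * (1 - d) / (1 - Complex.abs w) ≤ 2 * (1 - d) / (t/2) := by
      apply div_le_div_of_nonneg_left (by linarith) (by linarith) h1
    have h3 : 2 * (1 - d) / (t/2) = η / t := by
      rw [hη_def]; field_simp; ring
    rw [← le_div_iff₀ ht0]
    calc Complex.abs (dslope f 0 w - 1) ≤ 2 * (1 - d) / (1 - Complex.abs w) := this
      _ ≤ 2 * (1 - d) / (t/2) := h2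
      _ = η / t := h3
  -- f close to identity
  have hfc : ∀ w : ℂ, Complex.abs w ≤ 1 - t/2 → Complex.abs (f w - w) * t ≤ η := by
    intro w hw
    have hw_mem : w ∈ ball (0:ℂ) 1 := by
      rw [mem_ball_zero_iff, Complex.norm_eq_abs]; linarith
    have hfw : f w - w = w * (dslope f 0 w - 1) := by
      rcases eq_or_ne w 0 with rfl | hw0
      · simp [hf0]
      · rw [dslope_of_ne _ hw0, slope_def_field, hf0, sub_zero, sub_zero]
        field_simp
    rw [hfw, map_mul]
    have h1 : Complex.abs w ≤ 1 := by linarith [ht0]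
    calc Complex.abs w * Complex.abs (dslope f 0 w - 1) * t
        ≤ 1 * (Complex.abs (dslope f 0 w - 1) * t) := by
          rw [mul_assoc]
          apply mul_le_mul_of_nonneg_right h1
          positivity
      _ = Complex.abs (dslope f 0 w - 1) * t := one_mul _
      _ ≤ η := hg_est w hw
  -- Cauchy estimate for deriv f z
  have hfz_diffAt : DifferentiableAt ℂ f z := hf_diff.differentiableAt (isOpen_ball.mem_nhds hz_mem)
  set A : ℂ := deriv f z with hA_def
  have hA_est : Complex.abs (A - 1) * t^2 ≤ 6 * η := by
    set fT : ℂ → ℂ := fun w => f w - w with hfT_def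
    have hsub : ball z (t/2) ⊆ ball (0:ℂ) 1 := by
      intro w hw
      rw [mem_ball, dist_zero_right, Complex.norm_eq_abs]
      rw [mem_ball] at hw
      have : Complex.abs (w - z) < t/2 := by rwa [Complex.dist_eq] at hw
      have htri : Complex.abs w ≤ Complex.abs (w - z) + Complex.abs z := by
        calc Complex.abs w = Complex.abs ((w - z) + z) := by ring_nf
          _ ≤ _ := Complex.abs.add_le _ _
      linarith
    have habs_in : ∀ w ∈ ball z (t/2), Complex.abs w ≤ 1 - t/2 := by
      intro w hw
      rw [mem_ball] at hw
      have : Complex.abs (w - z) < t/2 := by rwa [Complex.dist_eq] at hw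
      have htri : Complex.abs w ≤ Complex.abs (w - z) + Complex.abs z := by
        calc Complex.abs w = Complex.abs ((w - z) + z) := by ring_nf
          _ ≤ _ := Complex.abs.add_le _ _
      linarith
    have hT_diff : DifferentiableOn ℂ fT (ball z (t/2)) :=
      (hf_diff.mono hsub).sub differentiableOn_id
    have hT_maps : MapsTo fT (ball z (t/2)) (ball (fT z) (3 * η / t)) := by
      intro w hw
      rw [mem_ball]
      have h1 : Complex.abs (fT w) * t ≤ η := hfc w (habs_in w hw)
      have h2 : Complex.abs (fT z) * t ≤ η := hfc z (by linarith [hz_le, ht0])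
      have htri : Complex.abs (fT w - fT z) ≤ Complex.abs (fT w) + Complex.abs (fT z) :=
        abs_sub_le'' _ _
      rw [Complex.dist_eq, Complex.norm_eq_abs]
      rw [lt_div_iff₀ ht0]
      nlinarith [Complex.abs.nonneg (fT w - fT z)]
    have hzz : z ∈ ball z (t/2) := mem_ball_self (by linarith)
    have HC := Complex.norm_dslope_le_div_of_mapsTo_ball hT_diff (hT_maps.mono_right ball_subset_closedBall) hzz
    rw [dslope_same] at HC
    have hderivT : deriv fT z = A - 1 := by
      have : HasDerivAt fT (A - 1) z := by
        rw [hfT_def]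
        exact (hfz_diffAt.hasDerivAt).sub (hasDerivAt_id z)
      exact this.deriv
    rw [hderivT, Complex.norm_eq_abs] at HC
    have heq : 3 * η / t / (t/2) = 6 * η / t^2 := by field_simp; ring
    rw [heq] at HC
    rw [le_div_iff₀ (by positivity : (0:ℝ) < t^2)] at HC
    linarith
  -- chain rule: deriv F ζ
  have hζ1 : ζ + 1 ≠ 0 := halfPlane_add_one_ne hζ
  have hfz_mem : f z ∈ ball (0:ℂ) 1 := hf_maps hz_mem
  have hfz_abs : Complex.abs (f z) < 1 := by
    rwa [mem_ball_zero_iff, Complex.norm_eq_abs] at hfz_mem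
  have hfz1 : (1:ℂ) - f z ≠ 0 := ball_one_sub_ne hfz_mem
  have hDF : deriv F ζ = 2 / (1 - f z)^2 * (A * (2 / (ζ + 1)^2)) := by
    have HΦζ : HasDerivAt φ (2 / (ζ + 1)^2) ζ := hasDerivAt_cayley hζ1
    have Hfz : HasDerivAt f A z := hfz_diffAt.hasDerivAt
    have HΨf : HasDerivAt ψ (2 / (1 - f z)^2) (f z) := hasDerivAt_invcayley hfz1
    have Hcomp : HasDerivAt (ψ ∘ f ∘ φ) (2 / (1 - f z)^2 * (A * (2 / (ζ + 1)^2))) ζ :=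
      HΨf.comp ζ (Hfz.comp ζ HΦζ)
    have hEv : F =ᶠ[nhds ζ] (ψ ∘ f ∘ φ) := by
      filter_upwards [isOpen_halfPlane.mem_nhds hζ] with x hx
      have h1 : ψ (φ x) = x := inv_cayley_cayley hx
      have h2 : ψ (φ (F x)) = F x := inv_cayley_cayley (hFm hx)
      simp only [Function.comp_apply, hf_def]
      rw [h1, h2]
    exact (Hcomp.congr_of_eventuallyEq hEv).deriv
  have h1z : (1:ℂ) - z = 2 / (ζ + 1) := by
    rw [hz_def, hφ_def]
    field_simp
    ring
  have hDF2 : deriv F ζ = A * (1 - z)^2 / (1 - f z)^2 := by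
    rw [hDF, h1z]
    field_simp
  -- final numeric estimate
  set u : ℂ := f z - z with hu_def
  set D : ℂ := 1 - z with hD_def
  set B : ℂ := 1 - f z with hB_def
  have hBD : B = D - u := by rw [hB_def, hD_def, hu_def]; ring
  have hB0 : B ≠ 0 := hfz1
  have hDF3 : deriv F ζ = A * D^2 / B^2 := hDF2
  have hu_le : Complex.abs u * t ≤ η := hfc z (by linarith [hz_le, ht0])
  clear_value A u D B
  have hu_half : Complex.abs u ≤ t/2 := by nlinarith [Complex.abs.nonneg u, hη_small, ht0]
  have habs1 : (1:ℝ) ≤ Complex.abs D + Complex.abs z := by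
    have : Complex.abs (D + z) ≤ Complex.abs D + Complex.abs z := Complex.abs.add_le _ _
    have h2 : D + z = 1 := by rw [hD_def]; ring
    rw [h2] at this; simpa using this
  have hD_lb : t ≤ Complex.abs D := by linarith
  have hD_ub : Complex.abs D ≤ 2 := by
    have : Complex.abs D ≤ Complex.abs 1 + Complex.abs z := by
      rw [hD_def]; exact abs_sub_le'' _ _
    simp at this; linarith
  have hB_lb : t/2 ≤ Complex.abs B := by
    have : Complex.abs D ≤ Complex.abs B + Complex.abs u := by
      have h : D = B + u := by rw [hBD]; ring
      rw [h]; exact Complex.abs.add_le _ _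
    linarith
  have hB_ub : Complex.abs B ≤ 3 := by
    have : Complex.abs B ≤ Complex.abs D + Complex.abs u := by
      rw [hBD]; exact abs_sub_le'' _ _
    linarith [hu_half, ht1]
  have hnum : A * D^2 - B^2 = (A - 1) * D^2 + u * (D + B) := by
    rw [hBD]; ring
  have hXeq : deriv F ζ - 1 = (A * D^2 - B^2) / B^2 := by
    rw [hDF3]
    field_simp
  set X : ℝ := Complex.abs (deriv F ζ - 1) with hX_def
  have hX_val : X * Complex.abs B ^ 2 = Complex.abs (A * D^2 - B^2) := by
    rw [hX_def, hXeq, map_div₀, map_pow]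
    have hB0 : Complex.abs B ≠ 0 := by
      apply ne_of_gt; linarith
    field_simp
  have hX_nonneg' : 0 ≤ X := Complex.abs.nonneg _
  clear_value X
  have hnum_bound : Complex.abs (A * D^2 - B^2) * t^2 ≤ 29 * η := by
    have h1 : Complex.abs (A * D^2 - B^2)
        ≤ Complex.abs (A - 1) * Complex.abs D^2 + Complex.abs u * (Complex.abs D + Complex.abs B) := by
      rw [hnum]
      calc Complex.abs ((A - 1) * D^2 + u * (D + B))
          ≤ Complex.abs ((A - 1) * D^2) + Complex.abs (u * (D + B)) := Complex.abs.add_le _ _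
        _ = Complex.abs (A - 1) * Complex.abs D^2 + Complex.abs u * Complex.abs (D + B) := by
            rw [map_mul, map_mul, map_pow]
        _ ≤ _ := by
            have : Complex.abs (D + B) ≤ Complex.abs D + Complex.abs B := Complex.abs.add_le _ _
            nlinarith [Complex.abs.nonneg u]
    have hD2 : Complex.abs D ^ 2 ≤ 4 := by nlinarith
    have e1 : Complex.abs (A - 1) * t^2 * (Complex.abs D ^ 2) ≤ 6 * η * 4 :=
      mul_le_mul hA_est hD2 (by positivity) (by positivity)
    have hDBt : (Complex.abs D + Complex.abs B) * t ≤ 5 * 1 := by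
      have h5 : Complex.abs D + Complex.abs B ≤ 5 := by linarith
      have hnn : 0 ≤ Complex.abs D + Complex.abs B := by positivity
      nlinarith
    have e2 : (Complex.abs u * t) * ((Complex.abs D + Complex.abs B) * t) ≤ η * (5 * 1) :=
      mul_le_mul hu_le hDBt (by positivity) (by positivity)
    nlinarith [mul_le_mul_of_nonneg_right h1 (sq_nonneg t), e1, e2]
  have hX_nonneg : 0 ≤ X := hX_nonneg'
  have hBsq : t^2/4 ≤ Complex.abs B ^ 2 := by nlinarith
  have hfinal : X * t^4 ≤ 116 * η := by
    have h1 : X * (t^2/4) * t^2 ≤ X * Complex.abs B ^ 2 * t^2 := by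
      apply mul_le_mul_of_nonneg_right _ (by positivity)
      exact mul_le_mul_of_nonneg_left hBsq hX_nonneg
    rw [hX_val] at h1
    nlinarith [hnum_bound]
  -- conclude
  have hlast : X * t^4 < ε * t^4 := by
    calc X * t^4 ≤ 116 * η := hfinal
      _ < 116 * (4 * δ) := by linarith
      _ ≤ 464 * (ε * t^4/500) := by linarith [hδ_le_ε]
      _ < ε * t^4 := by
          have hp : 0 < ε * t^4 := by positivity
          linarith
  rw [Complex.norm_eq_abs, ← hX_def]
  exact lt_of_mul_lt_mul_right hlast (by positivity)
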